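/- Let H be an infinite-dimensional separable real Hilbert space and let Q be a bounded operator on H with Q† ∘ Q = 1. Suppose there is a finite-dimensional subspace V of H such that Q v = v for every v in the orthogonal complement of V, Q maps V into itself, and the restriction of Q to V (as a linear automorphism of the finite-dimensional space V) has determinant 1. Then there exist T > 0, continuous curves α, β : ℝ → H, and a map R : ℝ → (H →L[ℝ] H) such that R 0 = 1, for every t ∈ ℝ the map R has derivative (K_t) ∘ (R t) at t where K_t x = ⟪β t, x⟫ • (α t) − ⟪α t, x⟫ • (β t), and R T = Q exactly. -/

import Mathlib

open ContinuousLinearMap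
open scoped RealInnerProductSpace

namespace Stmt2Aux

variable {H : Type*} [NormedAddCommGroup H] [InnerProductSpace ℝ H]

/-- rank-one operator `x ↦ ⟪u,x⟫ u`. -/
noncomputable def P (u : H) : H →L[ℝ] H := (innerSL ℝ u).smulRight u

/-- rank-two skew operator `x ↦ ⟪b,x⟫ a - ⟪a,x⟫ b`. -/
noncomputable def A (a b : H) : H →L[ℝ] H :=
  (innerSL ℝ b).smulRight a - (innerSL ℝ a).smulRight b

/-- rotation by angle `θ` in the plane spanned by the orthonormal pair `a, b`. -/
noncomputable def rot (a b : H) (θ : ℝ) : H →L[ℝ] H :=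
  1 + (Real.cos θ - 1) • (P a + P b) + Real.sin θ • A a b

/-- reflection in the hyperplane orthogonal to the unit vector `u`. -/
noncomputable def refl (u : H) : H →L[ℝ] H := 1 - (2:ℝ) • P u

@[simp] lemma A_zero_left (b : H) : A 0 b = 0 := by ext x; simp [A]

lemma A_smul_left (c : ℝ) (a b : H) : A (c • a) b = c • A a b := by
  ext x
  simp [A, real_inner_smul_left, smul_smul, smul_sub, mul_comm]

@[simp] lemma rot_zero (a b : H) : rot a b 0 = 1 := by simp [rot]

lemma refl_apply (u x : H) : refl u x = x - (2 * ⟪u, x⟫) • u := by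
  simp [refl, P, two_smul, two_mul, add_smul]

lemma rot_apply (a b : H) (θ : ℝ) (x : H) :
    rot a b θ x = x + (Real.cos θ - 1) • (⟪a, x⟫ • a + ⟪b, x⟫ • b)
      + Real.sin θ • (⟪b, x⟫ • a - ⟪a, x⟫ • b) := by
  simp [rot, A, P, smul_add, smul_sub]

lemma inner_self_one {u : H} (hu : ‖u‖ = 1) : ⟪u, u⟫ = 1 := by
  rw [real_inner_self_eq_norm_mul_norm, hu]; norm_num

lemma A_comp_rot {a b : H} (ha : ⟪a,a⟫ = 1) (hb : ⟪b,b⟫ = 1) (hab : ⟪a,b⟫ = 0) (θ : ℝ) :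
    (A a b).comp (rot a b θ) = Real.cos θ • A a b - Real.sin θ • (P a + P b) := by
  have hba : ⟪b,a⟫ = 0 := by rw [real_inner_comm]; exact hab
  have pyth : Real.sin θ ^ 2 + Real.cos θ ^ 2 = 1 := Real.sin_sq_add_cos_sq θ
  have ha2 : ‖a‖ ^ 2 = 1 := by rw [← real_inner_self_eq_norm_sq]; exact ha
  have hb2 : ‖b‖ ^ 2 = 1 := by rw [← real_inner_self_eq_norm_sq]; exact hb
  ext x
  simp [rot, A, P, inner_add_right, inner_sub_right, real_inner_smul_right,
    ha, hb, hab, hba, smul_smul, smul_sub, smul_add, ha2, hb2]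
  match_scalars <;> nlinarith [pyth]

lemma hasDerivAt_rot {a b : H} (ha : ⟪a,a⟫ = 1) (hb : ⟪b,b⟫ = 1) (hab : ⟪a,b⟫ = 0) (θ : ℝ) :
    HasDerivAt (rot a b) ((A a b).comp (rot a b θ)) θ := by
  rw [A_comp_rot ha hb hab]
  have h1 : HasDerivAt (fun θ : ℝ => (Real.cos θ - 1) • (P a + P b))
      ((-Real.sin θ) • (P a + P b)) θ :=
    (((Real.hasDerivAt_cos θ).sub_const 1)).smul_const (P a + P b)
  have h2 : HasDerivAt (fun θ : ℝ => Real.sin θ • A (a:H) b) (Real.cos θ • A a b) θ :=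
    (Real.hasDerivAt_sin θ).smul_const (A a b)
  have h := ((hasDerivAt_const θ (1 : H →L[ℝ] H)).add h1).add h2
  exact h.congr_deriv (by module)

/-- The key existence predicate: `Q` is reached at time `T` by a rank-two-generated flow
that is frozen before time `0` and after time `T`. -/
def Good (T : ℝ) (Q : H →L[ℝ] H) : Prop :=
  0 ≤ T ∧ ∃ (α β : ℝ → H) (R : ℝ → H →L[ℝ] H),
    Continuous α ∧ Continuous β ∧
    (∀ t : ℝ, HasDerivAt R ((A (α t) (β t)).comp (R t)) t) ∧
    (∀ t : ℝ, t ≤ 0 → R t = 1 ∧ α t = 0) ∧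
    (∀ t : ℝ, T ≤ t → R t = Q ∧ α t = 0)

lemma good_one : Good (1 : ℝ) (1 : H →L[ℝ] H) := by
  refine ⟨zero_le_one, 0, 0, fun _ => 1, continuous_const, continuous_const, ?_, ?_, ?_⟩
  · intro t
    have : HasDerivAt (fun _ : ℝ => (1 : H →L[ℝ] H)) 0 t := hasDerivAt_const t 1
    simpa using this
  · exact fun t _ => ⟨rfl, rfl⟩
  · exact fun t _ => ⟨rfl, rfl⟩

lemma good_rot {a b : H} (ha : ⟪a,a⟫ = 1) (hb : ⟪b,b⟫ = 1) (hab : ⟪a,b⟫ = 0) (φ : ℝ) :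
    Good (1 : ℝ) (rot a b φ) := by
  set s := Real.smoothTransition
  have hs : ∀ t : ℝ, HasDerivAt s (deriv s t) t := fun t =>
    ((Real.smoothTransition.contDiff (n := 1)).differentiable (by simp)).differentiableAt.hasDerivAt
  refine ⟨zero_le_one, fun t => (φ * deriv s t) • a, fun _ => b,
    fun t => rot a b (φ * s t), ?_, continuous_const, ?_, ?_, ?_⟩
  · exact (continuous_const.mul ((Real.smoothTransition.contDiff (n := 2)).continuous_deriv
      one_le_two)).smul continuous_const
  · intro t
    have inner' : HasDerivAt (fun t : ℝ => φ * s t) (φ * deriv s t) t := (hs t).const_mul φ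
    have outer := hasDerivAt_rot ha hb hab (φ * s t)
    have h := outer.scomp t inner'
    rw [A_smul_left, smul_comp]
    exact h
  · intro t ht
    have h0 : s t = 0 := Real.smoothTransition.zero_of_nonpos ht
    have h1 : deriv s t = 0 := by
      have hd : HasDerivWithinAt s 0 (Set.Iic 0) t := by
        have he : Set.EqOn s (fun _ => (0:ℝ)) (Set.Iic 0) := fun x hx =>
          Real.smoothTransition.zero_of_nonpos hx
        exact (hasDerivWithinAt_const t _ 0).congr he (he ht)
      have := hd.derivWithin (uniqueDiffOn_Iic 0 t ht)
      rw [← this]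
      exact ((hs t).hasDerivWithinAt.derivWithin (uniqueDiffOn_Iic 0 t ht)).symm
    simp [h0, h1]
  · intro t ht
    have h0 : s t = 1 := Real.smoothTransition.one_of_one_le ht
    have h1 : deriv s t = 0 := by
      have hd : HasDerivWithinAt s 0 (Set.Ici 1) t := by
        have he : Set.EqOn s (fun _ => (1:ℝ)) (Set.Ici 1) := fun x hx =>
          Real.smoothTransition.one_of_one_le hx
        exact (hasDerivWithinAt_const t _ 1).congr he (he ht)
      have := hd.derivWithin (uniqueDiffOn_Ici 1 t ht)
      rw [← this]
      exact ((hs t).hasDerivWithinAt.derivWithin (uniqueDiffOn_Ici 1 t ht)).symm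
    simp [h0, h1]

lemma good_comp {T₁ T₂ : ℝ} {Q₁ Q₂ : H →L[ℝ] H} (h₁ : Good T₁ Q₁) (h₂ : Good T₂ Q₂) :
    Good (T₁ + 1 + T₂) (Q₂.comp Q₁) := by
  obtain ⟨hT₁, α₁, β₁, R₁, hc₁, hcb₁, hD₁, hfr₁, hto₁⟩ := h₁
  obtain ⟨hT₂, α₂, β₂, R₂, hc₂, hcb₂, hD₂, hfr₂, hto₂⟩ := h₂
  set c := T₁ + 1 with hc
  refine ⟨by linarith, fun t => α₁ t + α₂ (t - c),
    fun t => (1 - min (max (t - T₁) 0) 1) • β₁ (min t T₁)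
      + min (max (t - T₁) 0) 1 • β₂ (t - c),
    fun t => (R₂ (t - c)).comp (R₁ t), ?_, ?_, ?_, ?_, ?_⟩
  · exact hc₁.add (hc₂.comp (continuous_id.sub continuous_const))
  · have hg : Continuous fun t : ℝ => min (max (t - T₁) 0) 1 :=
      ((continuous_id.sub continuous_const).max continuous_const).min continuous_const
    exact ((continuous_const.sub hg).smul (hcb₁.comp (continuous_id.min continuous_const))).add
      (hg.smul (hcb₂.comp (continuous_id.sub continuous_const)))
  · intro t
    have d2 : HasDerivAt (fun t : ℝ => R₂ (t - c))
        ((A (α₂ (t - c)) (β₂ (t - c))).comp (R₂ (t - c))) t := by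
      have h := (hD₂ (t - c)).scomp t ((hasDerivAt_id t).sub_const c)
      simpa [Function.comp_def] using h
    have hd := d2.clm_comp (hD₁ t)
    rcases le_total t T₁ with h | h
    · have hfr := hfr₂ (t - c) (by simp only [hc]; linarith)
      have e1 : R₂ (t - c) = 1 := hfr.1
      have e2 : α₂ (t - c) = 0 := hfr.2
      have e3 : min (max (t - T₁) 0) 1 = 0 := by
        rw [max_eq_right (by linarith), min_eq_left zero_le_one]
      have e4 : min t T₁ = t := min_eq_left h
      convert hd using 1
      simp [e1, e2, e3, e4, A_zero_left, one_def]
    · rcases le_total t c with h' | h'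
      · have ha1 : α₁ t = 0 := (hto₁ t h).2
        have ha2 : α₂ (t - c) = 0 := (hfr₂ (t - c) (by linarith)).2
        convert hd using 1
        simp [ha1, ha2, A_zero_left]
      · have ha1 : α₁ t = 0 := (hto₁ t (by linarith)).2
        have e1 : R₁ t = Q₁ := (hto₁ t (by linarith)).1
        have e3 : min (max (t - T₁) 0) 1 = 1 := by
          rw [max_eq_left (by simp only [hc] at h' ⊢; linarith)]
          exact min_eq_right (by simp only [hc] at h' ⊢; linarith)
        convert hd using 1
        simp [ha1, e1, e3, A_zero_left, comp_assoc]
  · intro t ht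
    have f1 := hfr₁ t ht
    have f2 := hfr₂ (t - c) (by simp only [hc]; linarith)
    exact ⟨by simp [f1.1, f2.1, one_def], by simp [f1.2, f2.2]⟩
  · intro t ht
    have f1 := hto₁ t (by linarith)
    have f2 := hto₂ (t - c) (by simp only [hc]; linarith)
    exact ⟨by simp [f1.1, f2.1], by simp [f1.2, f2.2]⟩

/-- Product of two reflections in an orthonormal-decomposed pair is a plane rotation. -/
lemma refl_comp_refl_eq_rot {a b : H} (ha : ⟪a,a⟫ = 1) (hb : ⟪b,b⟫ = 1) (hab : ⟪a,b⟫ = 0)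
    {s c θ : ℝ} (hsc : s^2 + c^2 = 1) (hcθ : Real.cos θ = 2*c^2 - 1)
    (hsθ : Real.sin θ = -(2*s*c)) :
    (refl (c • a + s • b)).comp (refl a) = rot a b θ := by
  have hba : ⟪b,a⟫ = 0 := by rw [real_inner_comm]; exact hab
  ext x
  simp only [coe_comp', Function.comp_apply, refl_apply, rot_apply, one_apply, hcθ, hsθ]
  simp only [inner_add_left, inner_sub_right, real_inner_smul_left, real_inner_smul_right,
    inner_add_right, ha, hb, hab, hba]
  match_scalars
  · ring
  · ring
  · linear_combination (-2 * ⟪b,x⟫) * hsc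

lemma refl_comp_refl_self {v : H} (hv : ‖v‖ = 1) : (refl v).comp (refl v) = 1 := by
  have hv' : ⟪v,v⟫ = 1 := inner_self_one hv
  ext x
  simp only [coe_comp', Function.comp_apply, refl_apply, ContinuousLinearMap.one_apply]
  simp only [inner_sub_right, real_inner_smul_right, hv']
  match_scalars <;> ring

lemma refl_comp_refl_cases {u v : H} (hu : ‖u‖ = 1) (hv : ‖v‖ = 1) :
    (refl u).comp (refl v) = 1 ∨
      ∃ (a b : H) (φ : ℝ), ⟪a,a⟫ = 1 ∧ ⟪b,b⟫ = 1 ∧ ⟪a,b⟫ = 0 ∧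
        (refl u).comp (refl v) = rot a b φ := by
  have hu' : ⟪u,u⟫ = 1 := inner_self_one hu
  have hv' : ⟪v,v⟫ = 1 := inner_self_one hv
  have huv : ⟪u,v⟫ = ⟪v,u⟫ := real_inner_comm v u
  by_cases hw : u - ⟪v,u⟫ • v = 0
  · left
    have h : u = ⟪v,u⟫ • v := sub_eq_zero.mp hw
    have hc2 : ⟪v,u⟫ * ⟪v,u⟫ = 1 := by
      have h1 := hu'
      nth_rewrite 1 [h] at h1
      nth_rewrite 1 [h] at h1
      rw [real_inner_smul_left, real_inner_smul_right, hv'] at h1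
      nlinarith [h1]
    have hrefl : refl u = refl v := by
      ext x
      rw [refl_apply, refl_apply, h, real_inner_smul_left]
      match_scalars
      · ring
      · linear_combination (-2*⟪v,x⟫) * hc2
    rw [hrefl]
    exact refl_comp_refl_self hv
  · right
    have hvw : ⟪v, u - ⟪v,u⟫ • v⟫ = 0 := by
      rw [inner_sub_right, real_inner_smul_right, hv']; ring
    have hww : ⟪u - ⟪v,u⟫ • v, u - ⟪v,u⟫ • v⟫ = 1 - ⟪v,u⟫^2 := by
      simp only [inner_sub_left, inner_sub_right, real_inner_smul_left, real_inner_smul_right,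
        hu', hv', huv]
      ring
    set w := u - ⟪v,u⟫ • v with hwdef
    have hnw0 : ‖w‖ ≠ 0 := norm_ne_zero_iff.mpr hw
    have hnwsq : ‖w‖^2 = 1 - ⟪v,u⟫^2 := by rw [← real_inner_self_eq_norm_sq]; exact hww
    have hnw : ‖w‖ = Real.sqrt (1 - ⟪v,u⟫^2) := by
      rw [← hnwsq, Real.sqrt_sq (norm_nonneg w)]
    set b := ‖w‖⁻¹ • w with hbdef
    have hb : ⟪b,b⟫ = 1 := by
      rw [hbdef, real_inner_smul_left, real_inner_smul_right, real_inner_self_eq_norm_sq]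
      field_simp
    have hvb : ⟪v,b⟫ = 0 := by rw [hbdef, real_inner_smul_right, hvw, mul_zero]
    have hc1 : |⟪v,u⟫| ≤ 1 := by
      have h := abs_real_inner_le_norm v u
      rwa [hu, hv, one_mul] at h
    set φ := Real.arccos ⟪v,u⟫ with hφdef
    have hcos : Real.cos φ = ⟪v,u⟫ := Real.cos_arccos (neg_le_of_abs_le hc1) (le_of_abs_le hc1)
    have hsin : Real.sin φ = ‖w‖ := by rw [hφdef, Real.sin_arccos, hnw]
    have hudec : u = Real.cos φ • v + Real.sin φ • b := by
      rw [hcos, hsin, hbdef, smul_smul, mul_inv_cancel₀ hnw0, one_smul, hwdef]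
      abel
    have pyth : Real.sin φ ^ 2 + Real.cos φ ^ 2 = 1 := Real.sin_sq_add_cos_sq φ
    refine ⟨v, b, -(2*φ), hv', hb, hvb, ?_⟩
    rw [hudec]
    exact refl_comp_refl_eq_rot hv' hb hvb pyth
      (by rw [Real.cos_neg, Real.cos_two_mul])
      (by rw [Real.sin_neg, Real.sin_two_mul])

lemma good_refl_list : ∀ (n : ℕ) (l : List H), l.length = 2 * n → (∀ u ∈ l, ‖u‖ = 1) →
    ∃ T : ℝ, Good T ((l.map refl).prod) := by
  intro n
  induction n with
  | zero =>
    intro l hl _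
    rw [Nat.mul_zero, List.length_eq_zero_iff] at hl
    subst hl
    exact ⟨1, by simpa using good_one⟩
  | succ n ih =>
    intro l hl hu
    match l with
    | u :: v :: tl =>
      have htl : tl.length = 2 * n := by
        simp only [List.length_cons] at hl
        omega
      obtain ⟨T, hT⟩ := ih tl htl (fun x hx => hu x (by simp [hx]))
      have hprod : ((u :: v :: tl).map refl).prod
          = ((refl u).comp (refl v)).comp ((tl.map refl).prod) := by
        simp only [List.map_cons, List.prod_cons, ← mul_assoc, mul_def]
        rw [comp_assoc]
      rcases refl_comp_refl_cases (hu u (by simp)) (hu v (by simp)) with hp | ⟨a, b, φ, ha, hb, hab, hp⟩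
      · refine ⟨T, ?_⟩
        rw [hprod, hp]
        have : (1 : H →L[ℝ] H).comp ((tl.map refl).prod) = (tl.map refl).prod := by
          ext x; simp
        rwa [this]
      · refine ⟨T + 1 + 1, ?_⟩
        rw [hprod, hp]
        exact good_comp hT (good_rot ha hb hab φ)


section Fin

open Submodule

variable {E : Type*} [NormedAddCommGroup E] [InnerProductSpace ℝ E]

lemma reflection_singleton_apply [FiniteDimensional ℝ E] {u : E} (hu : ‖u‖ = 1) (x : E) :
    reflection (ℝ ∙ u)ᗮ x = x - (2 * ⟪u,x⟫) • u := by
  rw [reflection_apply, starProjection_orthogonal_val, starProjection_singleton, hu]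
  push_cast
  match_scalars <;> ring

lemma reflection_zero_singleton [FiniteDimensional ℝ E] :
    reflection (ℝ ∙ (0:E))ᗮ = LinearIsometryEquiv.refl ℝ E := by
  ext x
  rw [reflection_apply]
  have h1 : (ℝ ∙ (0:E))ᗮ = ⊤ := by
    rw [Submodule.span_zero_singleton, Submodule.bot_orthogonal_eq_top]
  have h2 : ((ℝ ∙ (0:E))ᗮ.starProjection x : E) = x := by
    have := starProjection_eq_self_iff.mpr (by rw [h1]; trivial :
      x ∈ (ℝ ∙ (0:E))ᗮ)
    rw [this]
  rw [h2, two_smul]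
  simp

lemma det_refl_list [FiniteDimensional ℝ E] (l : List E) :
    ∃ l' : List E, (∀ u ∈ l', ‖u‖ = 1) ∧
      (l.map fun v => reflection (ℝ ∙ v)ᗮ).prod = (l'.map fun u => reflection (ℝ ∙ u)ᗮ).prod ∧
      LinearMap.det ((l.map fun v => reflection (ℝ ∙ v)ᗮ).prod.toLinearEquiv.toLinearMap)
        = (-1) ^ l'.length := by
  induction l with
  | nil =>
    refine ⟨[], by simp, by simp, ?_⟩
    have h1 : ((1 : E ≃ₗᵢ[ℝ] E)).toLinearEquiv.toLinearMap = LinearMap.id := rfl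
    simp [h1]
  | cons v tl ih =>
    obtain ⟨l', hl'u, hl'p, hl'd⟩ := ih
    have hmul : ∀ (f g : E ≃ₗᵢ[ℝ] E),
        (f * g).toLinearEquiv.toLinearMap
          = f.toLinearEquiv.toLinearMap ∘ₗ g.toLinearEquiv.toLinearMap := by
      intros f g; rfl
    by_cases hv : v = 0
    · refine ⟨l', hl'u, ?_, ?_⟩
      · rw [List.map_cons, List.prod_cons, hv, reflection_zero_singleton, ← hl'p]
        ext x
        simp
      · rw [List.map_cons, List.prod_cons, hv, reflection_zero_singleton]
        have : (LinearIsometryEquiv.refl ℝ E) * (tl.map fun v => reflection (ℝ ∙ v)ᗮ).prod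
            = (tl.map fun v => reflection (ℝ ∙ v)ᗮ).prod := one_mul _
        rw [this, hl'd]
    · set u := ‖v‖⁻¹ • v with hudef
      have hvn : ‖v‖ ≠ 0 := norm_ne_zero_iff.mpr hv
      have huu : ‖u‖ = 1 := by
        rw [hudef, norm_smul, norm_inv, norm_norm, inv_mul_cancel₀ hvn]
      have hspan : (ℝ ∙ u) = ℝ ∙ v :=
        Submodule.span_singleton_smul_eq ((inv_ne_zero hvn).isUnit) v
      have hrefl : reflection (ℝ ∙ v)ᗮ = reflection (ℝ ∙ u)ᗮ := by
        ext x
        rw [reflection_apply, reflection_apply]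
        simp only [hspan]
      refine ⟨u :: l', ?_, ?_, ?_⟩
      · intro w hw
        rcases List.mem_cons.mp hw with h | h
        · rw [h]; exact huu
        · exact hl'u w h
      · rw [List.map_cons, List.prod_cons, List.map_cons, List.prod_cons, hrefl, hl'p]
      · rw [List.map_cons, List.prod_cons, hmul, LinearMap.det_comp, hl'd, hrefl]
        have hdr : LinearMap.det ((reflection (ℝ ∙ u)ᗮ).toLinearEquiv.toLinearMap)
            = (-1 : ℝ) ^ Module.finrank ℝ (((ℝ ∙ u)ᗮ)ᗮ) := det_reflection _
        rw [hdr, Submodule.orthogonal_orthogonal, finrank_span_singleton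
          (by rw [hudef]; exact smul_ne_zero (inv_ne_zero hvn) hv)]
        rw [List.length_cons, pow_succ]
        ring

lemma exists_unit_refl_list [FiniteDimensional ℝ E] (φ : E ≃ₗᵢ[ℝ] E)
    (hdet : LinearMap.det (φ.toLinearEquiv.toLinearMap) = 1) :
    ∃ l : List E, (∀ u ∈ l, ‖u‖ = 1) ∧ Even l.length ∧
      φ = (l.map fun u => reflection (ℝ ∙ u)ᗮ).prod := by
  obtain ⟨l0, -, h⟩ := φ.reflections_generate_dim
  obtain ⟨l, hu, hp, hd⟩ := det_refl_list l0
  refine ⟨l, hu, ?_, by rw [h, hp]⟩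
  rw [← h, hdet] at hd
  exact (neg_one_pow_eq_one_iff_even (by norm_num : (-1:ℝ) ≠ 1)).mp hd.symm

end Fin

section Lift

open Submodule

variable {H : Type*} [NormedAddCommGroup H] [InnerProductSpace ℝ H]
variable {V : Submodule ℝ H} [FiniteDimensional ℝ V]

lemma refl_coe {u z : V} (hu : ‖u‖ = 1) :
    refl (u : H) (z : H) = ((reflection (ℝ ∙ u)ᗮ z : V) : H) := by
  rw [refl_apply, reflection_singleton_apply hu z]
  push_cast
  rw [Submodule.coe_inner]

lemma refl_orthogonal (u : V) {y : H} (hy : y ∈ Vᗮ) : refl (u:H) y = y := by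
  rw [refl_apply]
  rw [(Submodule.mem_orthogonal V y).mp hy (u:H) u.2]
  simp

lemma lift_list (l : List V) (hl : ∀ u ∈ l, ‖u‖ = 1) :
    (∀ x : V, ((l.map fun u : V => refl (u:H)).prod) (x:H)
        = (((l.map fun u : V => reflection (ℝ ∙ u)ᗮ).prod x : V) : H))
    ∧ ∀ y ∈ Vᗮ, ((l.map fun u : V => refl (u:H)).prod) y = y := by
  induction l with
  | nil => exact ⟨fun x => by simp, fun y _ => by simp⟩
  | cons u tl ih =>
    obtain ⟨ih1, ih2⟩ := ih (fun x hx => hl x (by simp [hx]))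
    constructor
    · intro x
      simp only [List.map_cons, List.prod_cons, ContinuousLinearMap.mul_def, coe_comp', Function.comp_apply]
      rw [ih1 x, refl_coe (hl u (by simp))]
      rfl
    · intro y hy
      simp only [List.map_cons, List.prod_cons, ContinuousLinearMap.mul_def, coe_comp', Function.comp_apply]
      rw [ih2 y hy, refl_orthogonal u hy]

end Lift

end Stmt2Aux

open Stmt2Aux

/-- A "finite-like" special orthogonal operator — one acting as the identity on the
orthogonal complement of a finite-dimensional invariant subspace `V`, with determinant 1
on `V` — is reached exactly at time `T` by the solution of an ODE `R' = K_t ∘ R`,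
`R 0 = 1`, with a rank-2 skew-adjoint generator built from continuous curves `α, β`. -/
theorem stmt_2 {H : Type*} [NormedAddCommGroup H] [InnerProductSpace ℝ H] [CompleteSpace H]
    (Q : H →L[ℝ] H)
    (hQ : (adjoint Q).comp Q = 1)
    (V : Submodule ℝ H) (hV : FiniteDimensional ℝ V)
    (hfix : ∀ v ∈ Vᗮ, Q v = v)
    (hmaps : ∀ v ∈ V, Q v ∈ V)
    (hdet : LinearMap.det ((Q : H →ₗ[ℝ] H).restrict hmaps) = 1) :
    ∃ (T : ℝ), 0 < T ∧
      ∃ (α β : ℝ → H) (R : ℝ → H →L[ℝ] H),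
        Continuous α ∧ Continuous β ∧ R 0 = 1 ∧
        (∀ t : ℝ, HasDerivAt R
          ((((innerSL ℝ (β t)).smulRight (α t)) -
            ((innerSL ℝ (α t)).smulRight (β t))).comp (R t)) t) ∧
        R T = Q := by
  classical
  have hadj : ∀ x : H, adjoint Q (Q x) = x := by
    intro x
    have h := congrArg (fun (f : H →L[ℝ] H) => f x) hQ
    simpa using h
  have hinner : ∀ x y : H, ⟪Q x, Q y⟫ = ⟪x, y⟫ := by
    intro x y
    rw [← ContinuousLinearMap.adjoint_inner_left Q y (Q x), hadj x]
  have hnorm : ∀ x : H, ‖Q x‖ = ‖x‖ := by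
    intro x
    have h := hinner x x
    rw [real_inner_self_eq_norm_sq, real_inner_self_eq_norm_sq] at h
    nlinarith [h, norm_nonneg (Q x), norm_nonneg x]
  set q := (Q : H →ₗ[ℝ] H).restrict hmaps with hqdef
  have hqn : ∀ v : V, ‖q v‖ = ‖v‖ := by
    intro v
    have h1 : ((q v : V) : H) = Q (v : H) := rfl
    rw [show ‖q v‖ = ‖((q v : V) : H)‖ from rfl, h1, hnorm]
    rfl
  have hinj : Function.Injective q := by
    apply (injective_iff_map_eq_zero q).mpr
    intro v hv
    have h := hqn v
    rw [hv, norm_zero] at h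
    exact norm_eq_zero.mp h.symm
  have hsurj : Function.Surjective q := LinearMap.injective_iff_surjective.mp hinj
  let φ : V ≃ₗᵢ[ℝ] V := ⟨LinearEquiv.ofBijective q ⟨hinj, hsurj⟩, hqn⟩
  have hdetφ : LinearMap.det (φ.toLinearEquiv.toLinearMap) = 1 := hdet
  obtain ⟨l, hlu, hleven, hφl⟩ := exists_unit_refl_list φ hdetφ
  obtain ⟨m, hm⟩ := hleven
  obtain ⟨hlift1, hlift2⟩ := lift_list (V := V) l hlu
  have hQeq : Q = ((l.map fun u : V => refl (u:H)).prod) := by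
    ext x
    obtain ⟨y, hy, z, hz, rfl⟩ := V.exists_add_mem_mem_orthogonal x
    rw [map_add, map_add]
    congr 1
    · have h1 : Q y = ((q ⟨y, hy⟩ : V) : H) := rfl
      have h2 := hlift1 ⟨y, hy⟩
      rw [h1, h2]
      congr 1
      rw [← hφl]
      rfl
    · rw [hfix z hz, hlift2 z hz]
  have hlen : (l.map fun u : V => (u:H)).length = 2 * m := by
    rw [List.length_map, hm]; ring
  have hluH : ∀ u ∈ (l.map fun u : V => (u:H)), ‖u‖ = 1 := by
    intro u hu
    obtain ⟨v, hv, rfl⟩ := List.mem_map.mp hu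
    exact hlu v hv
  obtain ⟨T, hT⟩ := good_refl_list m (l.map fun u : V => (u:H)) hlen hluH
  rw [List.map_map] at hT
  obtain ⟨hT0, α, β, R, hcα, hcβ, hD, hfr, hto⟩ := hT
  refine ⟨T + 1, by linarith, α, β, R, hcα, hcβ, (hfr 0 le_rfl).1, fun t => hD t, ?_⟩
  rw [(hto (T+1) (by linarith)).1, hQeq]
  rfl
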